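/- Let G₀ be a finite abelian group and write [[n]] = {n} × G₀ ⊆ ℤ × G₀. Let A⁽⁰⁾, A⁽¹⁾ ⊆ ℤ × G₀ agree on [[n]] for all n ≤ −n₀ (for some n₀), and let F ⊆ ℤ × G₀ be finite with A⁽⁰⁾ ⊕ F = A⁽¹⁾ ⊕ F (both tilings defined). Then for every function ω : ℤ → {0,1}, the mixed set A⁽ω⁾ = ⋃_{n∈ℤ} (A⁽^{ω(n)}⁾ ∩ [[n]]) satisfies A⁽ω⁾ ⊕ F = A⁽⁰⁾ ⊕ F (in particular this sumset is defined). (Swapping property.) -/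

import Mathlib

open Pointwise

open scoped Classical

/-- `A ⊕ F` is defined: all sums `a + f` with `a ∈ A`, `f ∈ F` are distinct. -/
def DistinctSums {G : Type*} [AddCommGroup G] (A F : Set G) : Prop :=
  ∀ a ∈ A, ∀ f ∈ F, ∀ a' ∈ A, ∀ f' ∈ F, a + f = a' + f' → a = a' ∧ f = f'

section SwapAux

variable {G : Type*} [AddCommGroup G] [Fintype G]

instance : CoeFun (AddMonoidAlgebra ℤ G) (fun _ => G → ℤ) := ⟨fun u => u.coeff⟩

/-- indicator of the `n`-th row of `B` as an element of `ℤ[G]`. -/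
noncomputable def rowInd (B : Set (ℤ × G)) (n : ℤ) : AddMonoidAlgebra ℤ G :=
  AddMonoidAlgebra.ofCoeff (Finsupp.equivFunOnFinite.symm fun x => if (n, x) ∈ B then (1 : ℤ) else 0)

@[simp] lemma rowInd_apply (B : Set (ℤ × G)) (n : ℤ) (x : G) :
    rowInd B n x = if (n, x) ∈ B then (1 : ℤ) else 0 := by
  simp [rowInd]

lemma conv_apply (u v : AddMonoidAlgebra ℤ G) (x : G) :
    (u * v) x = ∑ y : G, u y * v (x - y) := by
  classical
  rw [AddMonoidAlgebra.mul_apply]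
  rw [Finsupp.sum_fintype _ _ (by intro i; simp [Finsupp.sum])]
  refine Finset.sum_congr rfl fun a _ => ?_
  rw [Finsupp.sum_fintype _ _ (by intro i; simp)]
  rw [show (∑ a₂ : G, if a + a₂ = x then u a * v a₂ else 0)
      = ∑ a₂ : G, if a₂ = x - a then u a * v a₂ else 0 from
    Finset.sum_congr rfl fun a₂ _ => by
      refine if_congr ?_ rfl rfl
      constructor <;> intro h <;>
        [exact (eq_sub_iff_add_eq.2 (by rw [add_comm]; exact h)); exact (by rw [h]; abel)]]
  simp [Finset.sum_ite_eq']

/-- the reflection `x ↦ u (-x)` on `ℤ[G]`. -/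
noncomputable def barRefl (u : AddMonoidAlgebra ℤ G) : AddMonoidAlgebra ℤ G :=
  AddMonoidAlgebra.ofCoeff (Finsupp.equivFunOnFinite.symm fun x => u (-x))

@[simp] lemma barRefl_apply (u : AddMonoidAlgebra ℤ G) (x : G) : barRefl u x = u (-x) := by
  simp [barRefl]

lemma barRefl_mul (u v : AddMonoidAlgebra ℤ G) : barRefl (u * v) = barRefl u * barRefl v := by
  ext x
  rw [barRefl_apply, conv_apply, conv_apply]
  refine Fintype.sum_equiv (Equiv.neg G) _ _ fun y => ?_
  simp only [Equiv.neg_apply, barRefl_apply, neg_neg]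
  congr 2
  abel

/-- `ℤ[G]` is reduced: a square-zero element vanishes. -/
lemma sq_eq_zero (u : AddMonoidAlgebra ℤ G) (h : u * u = 0) : u = 0 := by
  set v := u * barRefl u with hv
  have hvsym : ∀ x, v (-x) = v x := by
    intro x
    rw [hv, conv_apply, conv_apply]
    refine Fintype.sum_equiv (Equiv.addLeft x) _ _ fun y => ?_
    simp only [Equiv.coe_addLeft, barRefl_apply]
    rw [mul_comm]
    congr 2 <;> abel
  have hvv : v * v = 0 := by
    rw [hv, mul_mul_mul_comm, h, ← barRefl_mul, h]
    simp [barRefl, Finsupp.equivFunOnFinite]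
  have hv0 : v = 0 := by
    have h0 : (v * v) 0 = 0 := by rw [hvv]; rfl
    rw [conv_apply] at h0
    have h0' : ∑ y : G, (v y) ^ 2 = 0 := by
      rw [← h0]
      refine Finset.sum_congr rfl fun y _ => ?_
      rw [show (0 : G) - y = -y by abel, hvsym]; ring
    ext y
    have := Finset.sum_eq_zero_iff_of_nonneg
      (fun y _ => sq_nonneg (v y)) |>.1 h0' y (Finset.mem_univ y)
    simpa [pow_eq_zero_iff] using this
  ext y
  have h0 : v 0 = 0 := by rw [hv0]; rfl
  rw [hv, conv_apply] at h0
  have h0' : ∑ z : G, (u z) ^ 2 = 0 := by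
    rw [← h0]
    refine Finset.sum_congr rfl fun z _ => ?_
    rw [barRefl_apply, show -((0:G) - z) = z by abel]; ring
  have := Finset.sum_eq_zero_iff_of_nonneg
    (fun z _ => sq_nonneg (u z)) |>.1 h0' y (Finset.mem_univ y)
  simpa [pow_eq_zero_iff] using this

/-- Armendariz-style key lemma for "power series" over a reduced comm ring. -/
lemma key_lemma {R : Type*} [CommRing R] (hsq : ∀ u : R, u * u = 0 → u = 0)
    (d f : ℤ → R) (N n₁ : ℤ)
    (hf : ∀ j : ℤ, j < -N ∨ N < j → f j = 0)
    (hd : ∀ n ≤ n₁, d n = 0)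
    (hrel : ∀ k : ℤ, ∑ m ∈ Finset.Icc (k - N) (k + N), d m * f (k - m) = 0) :
    ∀ m j : ℤ, d m * f j = 0 := by
  set P : ℤ → Prop := fun k => ∀ m j : ℤ, m + j = k → d m * f j = 0 with hP
  have base : ∀ k ≤ n₁ - N, P k := by
    intro k hk m j hmj
    rcases le_or_gt j (-N) with hj | hj
    · rcases lt_or_eq_of_le hj with hj' | hj'
      · rw [hf j (Or.inl hj'), mul_zero]
      · have : m ≤ n₁ := by omega
        rw [hd m this, zero_mul]
    · rcases le_or_gt j N with hj2 | hj2
      · have : m ≤ n₁ := by omega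
        rw [hd m this, zero_mul]
      · rw [hf j (Or.inr hj2), mul_zero]
  have main : ∀ K : ℤ, ∀ k ≤ K, P k := by
    have step : ∀ K : ℤ, n₁ - N ≤ K → (∀ k ≤ K, P k) → P (K + 1) := by
      intro K hK ih
      set k := K + 1 with hk
      have inner : ∀ M : ℤ, ∀ m ≤ M, d m * f (k - m) = 0 := by
        have istep : ∀ M : ℤ, n₁ ≤ M → (∀ m ≤ M, d m * f (k - m) = 0) →
            d (M + 1) * f (k - (M + 1)) = 0 := by
          intro M hM iih
          set m := M + 1 with hm
          rcases lt_or_ge (k - m) (-N) with hcase | hcase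
          · rw [hf _ (Or.inl hcase), mul_zero]
          rcases lt_or_ge N (k - m) with hcase2 | hcase2
          · rw [hf _ (Or.inr hcase2), mul_zero]
          have hmem : m ∈ Finset.Icc (k - N) (k + N) := by
            rw [Finset.mem_Icc]; omega
          set X := d m * f (k - m) with hX
          have hXX : X * X = 0 := by
            have h1 : X * ∑ m' ∈ Finset.Icc (k - N) (k + N), d m' * f (k - m') = 0 := by
              rw [hrel k, mul_zero]
            rw [Finset.mul_sum] at h1
            have h2 : ∀ m' ∈ Finset.Icc (k - N) (k + N), m' ≠ m →
                X * (d m' * f (k - m')) = 0 := by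
              intro m' _ hne
              rcases lt_or_gt_of_ne hne with hlt | hgt
              · rw [iih m' (by omega), mul_zero]
              · have hdiag : d m * f (k - m') = 0 :=
                  ih (m + (k - m')) (by omega) m (k - m') rfl
                calc X * (d m' * f (k - m'))
                    = (d m * f (k - m')) * (d m' * f (k - m)) := by rw [hX]; ring
                  _ = 0 := by rw [hdiag, zero_mul]
            rwa [Finset.sum_eq_single_of_mem m hmem h2] at h1
          exact hsq X hXX
        intro M
        rcases le_or_gt M n₁ with hM | hM
        · intro m hm; rw [hd m (by omega), zero_mul]
        · intro m hm
          have hall : ∀ t : ℕ, ∀ m ≤ n₁ + t, d m * f (k - m) = 0 := by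
            intro t
            induction t with
            | zero => intro m hm; rw [hd m (by omega), zero_mul]
            | succ s ihs =>
              intro m hm
              rcases le_or_gt m (n₁ + s) with h' | h'
              · exact ihs m h'
              · have hmeq : m = n₁ + s + 1 := by omega
                have := istep (n₁ + s) (by omega) ihs
                rwa [hmeq]
          obtain ⟨t, ht⟩ : ∃ t : ℕ, m ≤ n₁ + t := ⟨(m - n₁).toNat, by omega⟩
          exact hall t m ht
      intro m j hmj
      have hj : j = k - m := by omega
      rw [hj]
      exact inner m m le_rfl
    intro K
    rcases le_or_gt K (n₁ - N) with hK | hK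
    · intro k hk; exact base k (by omega)
    · have hall : ∀ t : ℕ, ∀ k ≤ n₁ - N + t, P k := by
        intro t
        induction t with
        | zero => intro k hk; exact base k (by omega)
        | succ s ihs =>
          intro k hk
          rcases le_or_gt k (n₁ - N + s) with h' | h'
          · exact ihs k h'
          · have hkeq : k = (n₁ - N + s) + 1 := by omega
            rw [hkeq]
            exact step (n₁ - N + s) (by omega) ihs
      obtain ⟨t, ht⟩ : ∃ t : ℕ, K ≤ n₁ - N + t := ⟨(K - (n₁ - N)).toNat, by omega⟩
      intro k hk
      exact hall t k (by omega)
  intro m j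
  exact main (m + j) (m + j) le_rfl m j rfl

/-- the number of representations `t = a + q`, `a ∈ B`, `q ∈ F`, as a row-wise
sum of convolution coefficients. -/
lemma card_reps (F : Set (ℤ × G)) (hF : F.Finite) (N : ℤ)
    (hN : ∀ p ∈ F, |p.1| ≤ N) (B : Set (ℤ × G)) (t : ℤ × G) :
    ((hF.toFinset.filter fun q => t - q ∈ B).card : ℤ)
      = ∑ m ∈ Finset.Icc (t.1 - N) (t.1 + N), (rowInd B m * rowInd F (t.1 - m)) t.2 := by
  classical
  have hterm : ∀ m ∈ Finset.Icc (t.1 - N) (t.1 + N), (rowInd B m * rowInd F (t.1 - m)) t.2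
      = ∑ y : G, if (m, y) ∈ B ∧ (t.1 - m, t.2 - y) ∈ F then (1 : ℤ) else 0 := by
    intro m _
    rw [conv_apply]
    refine Finset.sum_congr rfl fun y _ => ?_
    simp only [rowInd_apply]
    split_ifs with h1 h2 h3 h4 h5 <;> simp_all
  rw [Finset.sum_congr rfl hterm, ← Finset.sum_product']
  rw [Finset.sum_boole]
  norm_cast
  refine Finset.card_bij' (fun q _ => (t.1 - q.1, t.2 - q.2))
    (fun p _ => (t.1 - p.1, t.2 - p.2)) ?_ ?_ ?_ ?_
  · intro q hq
    simp only [Finset.mem_filter, Set.Finite.mem_toFinset] at hq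
    obtain ⟨hqF, hqB⟩ := hq
    simp only [Finset.mem_filter, Finset.mem_product, Finset.mem_Icc, Finset.mem_univ, and_true]
    have habs := hN q hqF
    rw [abs_le] at habs
    refine ⟨⟨by omega, by omega⟩, ?_, ?_⟩
    · have : t - q = (t.1 - q.1, t.2 - q.2) := rfl
      rwa [this] at hqB
    · simpa using hqF
  · intro p hp
    simp only [Finset.mem_filter, Finset.mem_product, Finset.mem_Icc, Finset.mem_univ] at hp
    obtain ⟨_, hpB, hpF⟩ := hp
    simp only [Finset.mem_filter, Set.Finite.mem_toFinset]
    refine ⟨hpF, ?_⟩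
    have : t - (t.1 - p.1, t.2 - p.2) = (p.1, p.2) := by
      ext <;> simp
    rw [this]
    exact hpB
  · intro q _; ext <;> simp
  · intro p _; ext <;> simp

lemma mem_add_iff (F : Set (ℤ × G)) (hF : F.Finite) (B : Set (ℤ × G)) (t : ℤ × G) :
    t ∈ B + F ↔ (hF.toFinset.filter fun q => t - q ∈ B).Nonempty := by
  classical
  constructor
  · rintro ht
    rw [Set.mem_add] at ht
    obtain ⟨a, ha, q, hq, rfl⟩ := ht
    exact ⟨q, by simp [Set.Finite.mem_toFinset, hq, ha]⟩
  · rintro ⟨q, hq⟩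
    simp only [Finset.mem_filter, Set.Finite.mem_toFinset] at hq
    rw [Set.mem_add]
    exact ⟨t - q, hq.2, q, hq.1, by abel⟩

lemma card_reps_le_one (F : Set (ℤ × G)) (hF : F.Finite) (B : Set (ℤ × G))
    (hB : DistinctSums B F) (t : ℤ × G) :
    (hF.toFinset.filter fun q => t - q ∈ B).card ≤ 1 := by
  classical
  refine Finset.card_le_one.2 fun q hq q' hq' => ?_
  simp only [Finset.mem_filter, Set.Finite.mem_toFinset] at hq hq'
  have h := hB (t - q) hq.2 q hq.1 (t - q') hq'.2 q' hq'.1 (by abel)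
  exact h.2

end SwapAux

theorem statement6 {G₀ : Type*} [AddCommGroup G₀] [Fintype G₀]
    (A₀ A₁ : Set (ℤ × G₀)) (F : Set (ℤ × G₀)) (hF : F.Finite)
    (n₀ : ℤ)
    (hagree : ∀ n : ℤ, n ≤ -n₀ → ∀ x : G₀, ((n, x) ∈ A₀ ↔ (n, x) ∈ A₁))
    (h₀ : DistinctSums A₀ F) (h₁ : DistinctSums A₁ F)
    (heq : A₀ + F = A₁ + F)
    (ω : ℤ → Bool) :
    DistinctSums {p : ℤ × G₀ | if ω p.1 then p ∈ A₁ else p ∈ A₀} F ∧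
      {p : ℤ × G₀ | if ω p.1 then p ∈ A₁ else p ∈ A₀} + F = A₀ + F := by
  obtain ⟨B, hBdef⟩ : ∃ B : Set (ℤ × G₀),
      B = {p : ℤ × G₀ | if ω p.1 then p ∈ A₁ else p ∈ A₀} := ⟨_, rfl⟩
  rw [← hBdef]
  -- bound on first coordinates of F
  obtain ⟨N, hN⟩ : ∃ N : ℤ, ∀ p ∈ F, |p.1| ≤ N := by
    refine ⟨((hF.toFinset.sup fun p => p.1.natAbs : ℕ) : ℤ), fun p hp => ?_⟩
    have h : p.1.natAbs ≤ (hF.toFinset.sup fun p => p.1.natAbs) :=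
      Finset.le_sup (f := fun p => p.1.natAbs) ((Set.Finite.mem_toFinset hF).2 hp)
    rw [Int.abs_eq_natAbs]
    exact_mod_cast h
  -- representation counts agree for A₀ and A₁
  have Ecard : ∀ t : ℤ × G₀,
      (hF.toFinset.filter fun q => t - q ∈ A₀).card
        = (hF.toFinset.filter fun q => t - q ∈ A₁).card := by
    intro t
    have c0 := card_reps_le_one F hF A₀ h₀ t
    have c1 := card_reps_le_one F hF A₁ h₁ t
    have hne : (hF.toFinset.filter fun q => t - q ∈ A₀).Nonempty ↔
        (hF.toFinset.filter fun q => t - q ∈ A₁).Nonempty := by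
      rw [← mem_add_iff F hF A₀ t, ← mem_add_iff F hF A₁ t, heq]
    rw [← Finset.card_pos, ← Finset.card_pos] at hne
    omega
  -- the per-row difference
  have hfbound : ∀ j : ℤ, j < -N ∨ N < j → rowInd (G := G₀) F j = 0 := by
    intro j hj
    ext y
    simp only [rowInd_apply, AddMonoidAlgebra.coeff_zero, Finsupp.coe_zero, Pi.zero_apply]
    rw [if_neg]
    intro hmem
    have habs := hN (j, y) hmem
    simp only at habs
    rw [abs_le] at habs
    rcases hj with hj | hj <;> omega
  have hdzero : ∀ n ≤ -n₀, rowInd (G := G₀) A₁ n - rowInd A₀ n = 0 := by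
    intro n hn
    ext x
    rw [AddMonoidAlgebra.coeff_sub, Finsupp.sub_apply]
    simp only [rowInd_apply, AddMonoidAlgebra.coeff_zero, Finsupp.coe_zero, Pi.zero_apply, hagree n hn x]
    ring
  have hrel : ∀ k : ℤ, ∑ m ∈ Finset.Icc (k - N) (k + N),
      (rowInd A₁ m - rowInd A₀ m) * rowInd F (k - m) = 0 := by
    intro k
    ext x
    rw [AddMonoidAlgebra.coeff_sum, Finsupp.finset_sum_apply]
    have expand : ∀ m ∈ Finset.Icc (k - N) (k + N),
        ((rowInd A₁ m - rowInd A₀ m) * rowInd F (k - m)) x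
          = (rowInd A₁ m * rowInd F (k - m)) x - (rowInd A₀ m * rowInd F (k - m)) x := by
      intro m _
      rw [sub_mul, AddMonoidAlgebra.coeff_sub, Finsupp.sub_apply]
    rw [Finset.sum_congr rfl expand, Finset.sum_sub_distrib]
    have e0 := card_reps F hF N hN A₀ (k, x)
    have e1 := card_reps F hF N hN A₁ (k, x)
    rw [show ((k, x) : ℤ × G₀).1 = k from rfl, show ((k, x) : ℤ × G₀).2 = x from rfl] at e0 e1
    rw [← e0, ← e1, Ecard (k, x)]
    simp
  -- key conclusion: per-row counts agree
  have keyconc : ∀ m j : ℤ, rowInd (G := G₀) A₁ m * rowInd F j = rowInd A₀ m * rowInd F j := by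
    have h := key_lemma (fun u => sq_eq_zero u)
      (fun m => rowInd (G := G₀) A₁ m - rowInd A₀ m) (fun j => rowInd F j) N (-n₀)
      hfbound hdzero hrel
    intro m j
    have h2 := h m j
    rw [sub_mul, sub_eq_zero] at h2
    exact h2
  -- rows of B
  have hrowB : ∀ m : ℤ, rowInd B m = if ω m then rowInd A₁ m else rowInd A₀ m := by
    intro m
    ext x
    cases hw : ω m <;> simp [hBdef, hw, Set.mem_setOf_eq]
  have hrowBF : ∀ m j : ℤ, rowInd B m * rowInd F j = rowInd A₀ m * rowInd F j := by
    intro m j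
    rw [hrowB m]
    cases hw : ω m
    · simp
    · simp [keyconc m j]
  -- counts for B agree with counts for A₀
  have EcardB : ∀ t : ℤ × G₀,
      (hF.toFinset.filter fun q => t - q ∈ B).card
        = (hF.toFinset.filter fun q => t - q ∈ A₀).card := by
    intro t
    have eB := card_reps F hF N hN B t
    have e0 := card_reps F hF N hN A₀ t
    have h2 : ((hF.toFinset.filter fun q => t - q ∈ B).card : ℤ)
        = ((hF.toFinset.filter fun q => t - q ∈ A₀).card : ℤ) := by
      rw [eB, e0]
      exact Finset.sum_congr rfl fun m _ => by rw [hrowBF m (t.1 - m)]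
    exact_mod_cast h2
  have hBle : ∀ t : ℤ × G₀, (hF.toFinset.filter fun q => t - q ∈ B).card ≤ 1 := by
    intro t
    rw [EcardB t]
    exact card_reps_le_one F hF A₀ h₀ t
  constructor
  · intro a ha q hq a' ha' q' hq' habq
    have hqmem : q ∈ hF.toFinset.filter fun r => (a + q) - r ∈ B := by
      simp only [Finset.mem_filter, Set.Finite.mem_toFinset]
      refine ⟨hq, ?_⟩
      have h2 : a + q - q = a := by abel
      rwa [h2]
    have hq'mem : q' ∈ hF.toFinset.filter fun r => (a + q) - r ∈ B := by
      simp only [Finset.mem_filter, Set.Finite.mem_toFinset]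
      refine ⟨hq', ?_⟩
      have h2 : a + q - q' = a' := by rw [habq]; abel
      rwa [h2]
    have hqq' : q = q' := Finset.card_le_one.1 (hBle (a + q)) q hqmem q' hq'mem
    refine ⟨?_, hqq'⟩
    rw [← hqq'] at habq
    exact add_right_cancel habq
  · ext t
    rw [mem_add_iff F hF B t, mem_add_iff F hF A₀ t,
      ← Finset.card_pos, ← Finset.card_pos, EcardB t]
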